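/- Let U be a finite-dimensional factorizable quasitriangular Hopf algebra over a field k, let V, W be finite-dimensional U-modules, and let B be a nonzero finite-dimensional (End_k(W), End_k(V))-bimodule in U-mod which is compatible with the quantum moment maps μ_V : U → End_k(V) and μ_W : U → End_k(W) given by the representation morphisms, in the sense that h · b = μ_W(h₍₁₎) ▸ b ◂ μ_V(S(h₍₂₎)) for all h ∈ U, b ∈ B. Then B is isomorphic, as a bimodule in U-mod, to a finite direct sum of copies of Hom_k(V,W), where Hom_k(V,W) carries the U-action (h · f)(v) = h₍₁₎ · f(S(h₍₂₎) · v) and the bimodule structure by composition. -/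

import Mathlib

open Coalgebra TensorProduct MulOpposite

/-- The older Mathlib `Coalgebra.Repr`, with its indexing type bundled as a field. -/
structure Coalgebra.BundledRepr (R : Type*) {A : Type*}
    [CommSemiring R] [AddCommMonoid A] [Module R A] [CoalgebraStruct R A] (a : A) where
  /-- the indexing type of a representation of `comul a` -/
  {ι : Type*}
  /-- the finite indexing set of a representation of `comul a` -/
  (index : Finset ι)
  /-- the first coordinate of a representation of `comul a` -/
  (left : ι → A)
  /-- the second coordinate of a representation of `comul a` -/
  (right : ι → A)
  /-- `comul a` is equal to a finite sum of some pure tensors -/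
  (eq : ∑ i ∈ index, left i ⊗ₜ[R] right i = CoalgebraStruct.comul a)

section rkaux
variable {k W : Type*} [Field k] [AddCommGroup W] [Module k W]
variable {n : ℕ} (b : Module.Basis (Fin n) k W)

/-- Rank-one endomorphism `|b s⟩⟨b s'|`. -/
noncomputable def rk (s s' : Fin n) : Module.End k W :=
  (b.coord s').smulRight (b s)

lemma rk_apply (s s' : Fin n) (x : W) : rk b s s' x = b.coord s' x • b s := rfl

lemma rk_mul (s s' t t' : Fin n) :
    rk b s s' * rk b t t' = if s' = t then rk b s t' else 0 := by
  ext x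
  simp only [Module.End.mul_apply, rk_apply, map_smul, smul_eq_mul, Module.Basis.coord_apply,
    Module.Basis.repr_self, Finsupp.single_apply]
  split_ifs with h1 h2 h2
  · simp [rk_apply, Module.Basis.coord_apply]
  · exact absurd h1.symm h2
  · exact absurd h2.symm h1
  · simp

lemma rk_sum : ∑ s, rk b s s = 1 := by
  ext x
  simp [rk_apply, Module.Basis.sum_repr]

lemma rk_mul_g (s s' : Fin n) (g : Module.End k W) :
    rk b s s' * g = ∑ t, b.coord s' (g (b t)) • rk b s t := by
  ext x
  simp only [Module.End.mul_apply, rk_apply, LinearMap.sum_apply, LinearMap.smul_apply,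
    smul_smul]
  rw [← Finset.sum_smul]
  congr 1
  calc b.coord s' (g x) = b.coord s' (g (∑ t, b.repr x t • b t)) := by rw [Module.Basis.sum_repr]
    _ = ∑ t, b.repr x t * b.coord s' (g (b t)) := by
        simp only [map_sum, map_smul, smul_eq_mul]
    _ = ∑ t, b.coord s' (g (b t)) * b.coord t x := by
        simp [Module.Basis.coord_apply, mul_comm]

lemma g_mul_rk (s s' : Fin n) (g : Module.End k W) :
    g * rk b s s' = ∑ t, b.coord t (g (b s)) • rk b t s' := by
  ext x
  simp only [Module.End.mul_apply, rk_apply, map_smul, LinearMap.sum_apply,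
    LinearMap.smul_apply]
  conv_lhs => rw [← b.sum_repr (g (b s))]
  rw [Finset.smul_sum]
  exact Finset.sum_congr rfl fun t _ => smul_comm _ _ _

end rkaux

section TTaux
variable {k B V W : Type*} [Field k]
    [AddCommGroup B] [Module k B]
    [AddCommGroup V] [Module k V]
    [AddCommGroup W] [Module k W]
    {p q : ℕ} (bW : Module.Basis (Fin p) k W) (bV : Module.Basis (Fin q) k V)
    (actL : Module.End k W →ₐ[k] Module.End k B)
    (actR : (Module.End k V)ᵐᵒᵖ →ₐ[k] Module.End k B)

/-- The action on `B` of the matrix unit `|m_a⟩⟨m_c|` of `End (Hom(V,W))`. -/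
noncomputable def TT (a c : Fin p × Fin q) : Module.End k B :=
  actL (rk bW a.1 c.1) * actR (op (rk bV c.2 a.2))

variable (hcomm : ∀ (g : Module.End k W) (g' : Module.End k V),
      Commute (actL g) (actR (op g')))

include hcomm in
lemma TT_mul (a c d f : Fin p × Fin q) :
    TT bW bV actL actR a c * TT bW bV actL actR d f =
      if c = d then TT bW bV actL actR a f else 0 := by
  unfold TT
  rw [mul_assoc, ← mul_assoc (actR (op (rk bV c.2 a.2))), ← (hcomm _ _),
    mul_assoc, ← mul_assoc, ← map_mul, ← map_mul, ← op_mul, rk_mul, rk_mul]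
  by_cases h : c = d
  · subst h
    simp [Prod.ext_iff]
  · rw [Prod.ext_iff] at h
    push_neg at h
    by_cases h1 : c.1 = d.1
    · rw [if_pos h1, if_neg (fun hh => h h1 hh.symm), op_zero, map_zero, mul_zero, if_neg]
      rw [Prod.ext_iff]; tauto
    · rw [if_neg h1, map_zero, zero_mul, if_neg]
      rw [Prod.ext_iff]; tauto

lemma TT_sum : ∑ a, TT bW bV actL actR a a = 1 := by
  rw [Fintype.sum_prod_type]
  calc ∑ x, ∑ y, TT bW bV actL actR (x, y) (x, y)
      = (∑ x, actL (rk bW x x)) * (∑ y, actR (op (rk bV y y))) := by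
        rw [Finset.sum_mul_sum]; rfl
    _ = actL (∑ x, rk bW x x) * actR (op (∑ y, rk bV y y)) := by
        rw [map_sum, Finset.op_sum, map_sum]
    _ = 1 := by rw [rk_sum, rk_sum, map_one, op_one, map_one, one_mul]

include hcomm in
lemma TT_mul_actL (l : Fin p × Fin q) (g : Module.End k W) (k₀ : Fin p × Fin q) :
    TT bW bV actL actR k₀ l * actL g =
      ∑ s, bW.coord l.1 (g (bW s)) • TT bW bV actL actR k₀ (s, l.2) := by
  unfold TT
  rw [mul_assoc, ← (hcomm g _).eq, ← mul_assoc, ← map_mul, rk_mul_g, map_sum,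
    Finset.sum_mul]
  exact Finset.sum_congr rfl fun t _ => by rw [map_smul, smul_mul_assoc]

lemma TT_mul_actR (l : Fin p × Fin q) (g : Module.End k V) (k₀ : Fin p × Fin q) :
    TT bW bV actL actR k₀ l * actR (op g) =
      ∑ r, bV.coord r (g (bV l.2)) • TT bW bV actL actR k₀ (l.1, r) := by
  unfold TT
  rw [mul_assoc, ← map_mul, ← op_mul, g_mul_rk, Finset.op_sum, map_sum, Finset.mul_sum]
  exact Finset.sum_congr rfl fun t _ => by
    rw [op_smul, map_smul, mul_smul_comm]

/-- Module.Basis vectors `|bW s⟩⟨bV r|` of `Hom(V, W)`. -/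
noncomputable def mh (l : Fin p × Fin q) : V →ₗ[k] W :=
  (bV.coord l.2).smulRight (bW l.1)

lemma mh_apply (l : Fin p × Fin q) (v : V) : mh bW bV l v = bV.coord l.2 v • bW l.1 := rfl

/-- The dual basis functionals on `Hom(V, W)`. -/
noncomputable def muh (l : Fin p × Fin q) : (V →ₗ[k] W) →ₗ[k] k :=
  (bW.coord l.1).comp (LinearMap.applyₗ (bV l.2))

lemma muh_apply (l : Fin p × Fin q) (f : V →ₗ[k] W) :
    muh bW bV l f = bW.coord l.1 (f (bV l.2)) := rfl

lemma mh_sum (f : V →ₗ[k] W) : ∑ l, muh bW bV l f • mh bW bV l = f := by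
  ext v
  simp only [LinearMap.sum_apply, LinearMap.smul_apply, mh_apply, muh_apply]
  rw [Fintype.sum_prod_type_right]
  have step : ∀ r : Fin q, ∑ s, bW.coord s (f (bV r)) • (bV.coord r v • bW s)
      = bV.coord r v • f (bV r) := by
    intro r
    conv_rhs => rw [← bW.sum_repr (f (bV r))]
    rw [Finset.smul_sum]
    exact Finset.sum_congr rfl fun s _ => smul_comm _ _ _
  calc ∑ y, ∑ x, bW.coord x (f (bV y)) • (bV.coord y v • bW x)
      = ∑ y, bV.coord y v • f (bV y) := Finset.sum_congr rfl fun r _ => step r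
    _ = f v := by
        conv_rhs => rw [← bV.sum_repr v]
        rw [map_sum]
        exact Finset.sum_congr rfl fun r _ => by simp [Module.Basis.coord_apply]

lemma muh_mh (l l' : Fin p × Fin q) :
    muh bW bV l (mh bW bV l') = if l = l' then 1 else 0 := by
  simp only [muh_apply, mh_apply, map_smul, smul_eq_mul, Module.Basis.coord_apply,
    Module.Basis.repr_self, Finsupp.single_apply, Prod.ext_iff]
  split_ifs with h1 h2 h2 <;> simp_all <;> tauto

end TTaux


universe w

lemma repr_sum_eq {k U M : Type*} [CommSemiring k] [AddCommMonoid U] [Module k U]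
    [CoalgebraStruct k U] [AddCommMonoid M] [Module k M]
    (Φ : U →ₗ[k] U →ₗ[k] M) {h : U} (r : Coalgebra.BundledRepr k h) :
    ∑ m ∈ r.index, Φ (r.left m) (r.right m) = TensorProduct.lift Φ (Coalgebra.comul h) := by
  rw [← r.eq, map_sum]
  simp

/-- A representation of `comul a` whose index type lives in an arbitrary universe. -/
noncomputable def reprULift {R : Type*} {A : Type*} [CommSemiring R] [AddCommMonoid A]
    [Module R A] [CoalgebraStruct R A] (a : A) : Coalgebra.BundledRepr R a :=
  let r := Coalgebra.Repr.arbitrary R a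
  { index := (Finset.univ : Finset (ULift.{w} (Fin r.index.card)))
    left := fun u => r.left (r.index.equivFin.symm u.down)
    right := fun u => r.right (r.index.equivFin.symm u.down)
    eq := by
      rw [← r.eq]
      calc ∑ u : ULift.{w} (Fin r.index.card),
            r.left (r.index.equivFin.symm u.down) ⊗ₜ[R] r.right (r.index.equivFin.symm u.down)
          = ∑ x : Fin r.index.card,
            r.left (r.index.equivFin.symm x) ⊗ₜ[R] r.right (r.index.equivFin.symm x) :=
            Fintype.sum_equiv Equiv.ulift _ _ (fun u => rfl)
        _ = ∑ y : {z // z ∈ r.index}, r.left y ⊗ₜ[R] r.right y :=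
            Equiv.sum_comp r.index.equivFin.symm (fun y => r.left y ⊗ₜ[R] r.right y)
        _ = ∑ i ∈ r.index, r.left i ⊗ₜ[R] r.right i := Finset.sum_coe_sort r.index (fun i => r.left i ⊗ₜ[R] r.right i) }

theorem aux_bimodule {k B V W : Type*} [Field k]
    [AddCommGroup B] [Module k B] [FiniteDimensional k B]
    [AddCommGroup V] [Module k V] [FiniteDimensional k V] [Nontrivial V]
    [AddCommGroup W] [Module k W] [FiniteDimensional k W] [Nontrivial W]
    (actL : Module.End k W →ₐ[k] Module.End k B)
    (actR : (Module.End k V)ᵐᵒᵖ →ₐ[k] Module.End k B)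
    (hcomm : ∀ (g : Module.End k W) (g' : Module.End k V),
      Commute (actL g) (actR (op g'))) :
    ∃ (n : ℕ) (e : B ≃ₗ[k] (Fin n → (V →ₗ[k] W))),
      (∀ (g : Module.End k W) (b : B) (i : Fin n), e (actL g b) i = g ∘ₗ e b i) ∧
      (∀ (g : Module.End k V) (b : B) (i : Fin n), e (actR (op g) b) i = e b i ∘ₗ g) := by
  classical
  obtain ⟨p, hp, bW'⟩ : ∃ p, 0 < p ∧ Nonempty (Module.Basis (Fin p) k W) :=
    ⟨Module.finrank k W, Module.finrank_pos, ⟨Module.finBasis k W⟩⟩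
  obtain ⟨bW⟩ := bW'
  obtain ⟨q, hq, bV'⟩ : ∃ q, 0 < q ∧ Nonempty (Module.Basis (Fin q) k V) :=
    ⟨Module.finrank k V, Module.finrank_pos, ⟨Module.finBasis k V⟩⟩
  obtain ⟨bV⟩ := bV'
  set K := Fin p × Fin q with hK
  let k₀ : K := (⟨0, hp⟩, ⟨0, hq⟩)
  set T : K → K → Module.End k B := TT bW bV actL actR with hT
  have Tmul : ∀ a c d f, T a c * T d f = if c = d then T a f else 0 :=
    TT_mul bW bV actL actR hcomm
  have Tsum : ∑ a, T a a = 1 := TT_sum bW bV actL actR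
  -- the submodule B₀
  set B₀ : Submodule k B := LinearMap.range (T k₀ k₀) with hB₀
  have hmem : ∀ (l : K) (b : B), T k₀ l b ∈ B₀ := by
    intro l b
    refine ⟨T k₀ l b, ?_⟩
    have h := Tmul k₀ k₀ k₀ l
    rw [if_pos rfl] at h
    calc T k₀ k₀ (T k₀ l b) = (T k₀ k₀ * T k₀ l) b := rfl
      _ = T k₀ l b := by rw [h]
  have hfix : ∀ z ∈ B₀, T k₀ k₀ z = z := by
    rintro z ⟨y, rfl⟩
    have h := Tmul k₀ k₀ k₀ k₀
    rw [if_pos rfl] at h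
    calc T k₀ k₀ (T k₀ k₀ y) = (T k₀ k₀ * T k₀ k₀) y := rfl
      _ = T k₀ k₀ y := by rw [h]
  set n := Module.finrank k B₀ with hn
  let c : Module.Basis (Fin n) k B₀ := Module.finBasis k B₀
  let xB : K → B →ₗ[k] B₀ := fun l =>
    LinearMap.codRestrict B₀ (T k₀ l) (fun b => hmem l b)
  let xc : K → Fin n → (B →ₗ[k] k) := fun l i => (c.coord i) ∘ₗ (xB l)
  have hxc_def : ∀ l i b, xc l i b = c.repr (⟨T k₀ l b, hmem l b⟩ : B₀) i := by
    intro l i b; rfl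
  let eL : B →ₗ[k] (Fin n → (V →ₗ[k] W)) :=
    LinearMap.pi (fun i => ∑ l, (xc l i).smulRight (mh bW bV l))
  let e'L : (Fin n → (V →ₗ[k] W)) →ₗ[k] B :=
    ∑ i, ∑ l, ((muh bW bV l).comp (LinearMap.proj i)).smulRight ((T l k₀) (c i))
  have heL : ∀ b i, eL b i = ∑ l, xc l i b • mh bW bV l := by
    intro b i
    simp [eL, LinearMap.pi_apply, LinearMap.sum_apply, LinearMap.smulRight_apply]
  have he'L : ∀ F, e'L F = ∑ i, ∑ l, muh bW bV l (F i) • (T l k₀) (c i) := by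
    intro F
    simp [e'L, LinearMap.sum_apply, LinearMap.smulRight_apply]
  -- key: recover T k₀ l b from coordinates
  have key1 : ∀ (l : K) (b : B), ∑ i, xc l i b • (c i : B) = T k₀ l b := by
    intro l b
    have h1 : ∑ i, xc l i b • (c i : B)
        = (B₀.subtype) (∑ i, c.repr (xB l b) i • c i) := by
      rw [map_sum]
      exact Finset.sum_congr rfl fun i _ => rfl
    rw [h1, c.sum_repr]
    rfl
  -- e'L ∘ eL = id
  have hinv1 : ∀ b, e'L (eL b) = b := by
    intro b
    have hmuel : ∀ i l, muh bW bV l (eL b i) = xc l i b := by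
      intro i l
      rw [heL b i, map_sum, Finset.sum_eq_single l]
      · rw [map_smul, muh_mh, if_pos rfl, smul_eq_mul, mul_one]
      · intro l' _ hne
        rw [map_smul, muh_mh, if_neg (fun h => hne h.symm), smul_eq_mul, mul_zero]
      · intro h; exact absurd (Finset.mem_univ l) h
    rw [he'L]
    calc ∑ i, ∑ l, muh bW bV l (eL b i) • T l k₀ (c i)
        = ∑ i, ∑ l, xc l i b • T l k₀ (c i) := by
          exact Finset.sum_congr rfl fun i _ => Finset.sum_congr rfl fun l _ => by
            rw [hmuel]
      _ = ∑ l, ∑ i, xc l i b • T l k₀ (c i) := Finset.sum_comm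
      _ = ∑ l, T l k₀ (T k₀ l b) := by
          refine Finset.sum_congr rfl fun l _ => ?_
          rw [← key1 l b, map_sum]
          exact Finset.sum_congr rfl fun i _ => by rw [map_smul]
      _ = ∑ l, (T l k₀ * T k₀ l) b := rfl
      _ = ∑ l, T l l b := by
          refine Finset.sum_congr rfl fun l _ => ?_
          have h := Tmul l k₀ k₀ l
          rw [if_pos rfl] at h
          rw [h]
      _ = (∑ l, T l l) b := by rw [LinearMap.sum_apply]
      _ = b := by rw [Tsum]; rfl
  -- eL ∘ e'L = id
  have hinv2 : ∀ F i, eL (e'L F) i = F i := by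
    intro F i
    have hx : ∀ l : K, T k₀ l (e'L F) = ∑ j, muh bW bV l (F j) • (c j : B) := by
      intro l
      rw [he'L, map_sum]
      refine Finset.sum_congr rfl fun j _ => ?_
      rw [map_sum, Finset.sum_eq_single l]
      · rw [map_smul]
        congr 1
        have h := Tmul k₀ l l k₀
        rw [if_pos rfl] at h
        calc T k₀ l (T l k₀ (c j)) = (T k₀ l * T l k₀) (c j) := rfl
          _ = T k₀ k₀ (c j) := by rw [h]
          _ = (c j : B) := hfix _ (c j).2
      · intro l' _ hne
        rw [map_smul]
        have h := Tmul k₀ l l' k₀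
        rw [if_neg (fun hh => hne hh.symm)] at h
        calc muh bW bV l' (F j) • T k₀ l (T l' k₀ (c j))
            = muh bW bV l' (F j) • (T k₀ l * T l' k₀) (c j) := rfl
          _ = 0 := by rw [h]; simp
      · intro h; exact absurd (Finset.mem_univ l) h
    have hxc2 : ∀ l : K, xc l i (e'L F) = muh bW bV l (F i) := by
      intro l
      have hxb : xB l (e'L F) = ∑ j, muh bW bV l (F j) • c j := by
        apply Subtype.ext
        calc (xB l (e'L F) : B) = T k₀ l (e'L F) := rfl
          _ = ∑ j, muh bW bV l (F j) • (c j : B) := hx l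
          _ = ((∑ j, muh bW bV l (F j) • c j : B₀) : B) := by
              rw [show ((∑ j, muh bW bV l (F j) • c j : B₀) : B)
                  = B₀.subtype (∑ j, muh bW bV l (F j) • c j) from rfl, map_sum]
              rfl
      rw [show xc l i (e'L F) = c.repr (xB l (e'L F)) i from rfl, hxb]
      simp [map_sum, map_smul, Module.Basis.repr_self, Finsupp.single_apply]
    rw [heL]
    calc ∑ l, xc l i (e'L F) • mh bW bV l
        = ∑ l, muh bW bV l (F i) • mh bW bV l := by
          exact Finset.sum_congr rfl fun l _ => by rw [hxc2]
      _ = F i := mh_sum bW bV (F i)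
  -- assemble the equivalence
  let e : B ≃ₗ[k] (Fin n → (V →ₗ[k] W)) :=
    LinearEquiv.ofLinear eL e'L
      (LinearMap.ext fun F => funext fun i => hinv2 F i)
      (LinearMap.ext hinv1)
  have he : ∀ b, e b = eL b := fun b => rfl
  -- extensionality via the functionals muh
  have hext : ∀ f₁ f₂ : V →ₗ[k] W,
      (∀ l : K, muh bW bV l f₁ = muh bW bV l f₂) → f₁ = f₂ := by
    intro f₁ f₂ h
    rw [← mh_sum bW bV f₁, ← mh_sum bW bV f₂]
    exact Finset.sum_congr rfl fun l _ => by rw [h l]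
  have hxc_eq : ∀ (l : K) i b, xc l i b = c.repr (xB l b) i := fun _ _ _ => rfl
  -- evaluation of eL at basis vectors
  have happ : ∀ (b : B) (i : Fin n) (r : Fin q),
      eL b i (bV r) = ∑ s, xc (s, r) i b • bW s := by
    intro b i r
    rw [heL]
    simp only [LinearMap.sum_apply, LinearMap.smul_apply, mh_apply]
    rw [Fintype.sum_prod_type]
    refine Finset.sum_congr rfl fun s _ => ?_
    rw [Finset.sum_eq_single r]
    · simp [Module.Basis.coord_apply, Module.Basis.repr_self]
    · intro u _ hne
      rw [Module.Basis.coord_apply, Module.Basis.repr_self, Finsupp.single_apply,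
        if_neg (fun h => hne h.symm), zero_smul, smul_zero]
    · intro h; exact absurd (Finset.mem_univ r) h
  have happ2 : ∀ (b : B) (i : Fin n) (l : K), muh bW bV l (eL b i) = xc l i b := by
    intro b i l
    rw [muh_apply, happ, map_sum]
    rw [Finset.sum_eq_single l.1]
    · simp [Module.Basis.coord_apply, Module.Basis.repr_self]
    · intro s _ hne
      rw [map_smul, Module.Basis.coord_apply, Module.Basis.repr_self, Finsupp.single_apply,
        if_neg hne, smul_eq_mul, mul_zero]
    · intro h; exact absurd (Finset.mem_univ l.1) h
  -- left equivariance
  have hTL : ∀ (l : K) (g : Module.End k W) (b : B),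
      T k₀ l (actL g b) = ∑ s, bW.coord l.1 (g (bW s)) • T k₀ (s, l.2) b := by
    intro l g b
    have h := TT_mul_actL bW bV actL actR hcomm l g k₀
    calc T k₀ l (actL g b) = (T k₀ l * actL g) b := rfl
      _ = ∑ s, bW.coord l.1 (g (bW s)) • T k₀ (s, l.2) b := by
          rw [hT, h]; simp [LinearMap.sum_apply]
  have hxcL : ∀ (l : K) (i : Fin n) (g : Module.End k W) (b : B),
      xc l i (actL g b) = ∑ s, bW.coord l.1 (g (bW s)) * xc (s, l.2) i b := by
    intro l i g b
    have hxb : xB l (actL g b) = ∑ s, bW.coord l.1 (g (bW s)) • xB (s, l.2) b := by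
      apply Subtype.ext
      calc (xB l (actL g b) : B) = T k₀ l (actL g b) := rfl
        _ = ∑ s, bW.coord l.1 (g (bW s)) • T k₀ (s, l.2) b := hTL l g b
        _ = ((∑ s, bW.coord l.1 (g (bW s)) • xB (s, l.2) b : B₀) : B) := by
            rw [show ((∑ s, bW.coord l.1 (g (bW s)) • xB (s, l.2) b : B₀) : B)
                = B₀.subtype (∑ s, bW.coord l.1 (g (bW s)) • xB (s, l.2) b) from rfl,
              map_sum]
            rfl
    rw [hxc_eq, hxb, map_sum, Finset.sum_apply']
    exact Finset.sum_congr rfl fun s _ => by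
      rw [map_smul, Finsupp.smul_apply, smul_eq_mul, hxc_eq]
  have hLeq : ∀ (g : Module.End k W) (b : B) (i : Fin n),
      eL (actL g b) i = g ∘ₗ eL b i := by
    intro g b i
    apply hext
    intro l
    rw [happ2, hxcL, muh_apply, LinearMap.comp_apply, happ, map_sum, map_sum]
    refine Finset.sum_congr rfl fun s _ => ?_
    rw [map_smul, map_smul, smul_eq_mul, mul_comm]
  -- right equivariance
  have hTR : ∀ (l : K) (g : Module.End k V) (b : B),
      T k₀ l (actR (op g) b) = ∑ r, bV.coord r (g (bV l.2)) • T k₀ (l.1, r) b := by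
    intro l g b
    have h := TT_mul_actR bW bV actL actR l g k₀
    calc T k₀ l (actR (op g) b) = (T k₀ l * actR (op g)) b := rfl
      _ = ∑ r, bV.coord r (g (bV l.2)) • T k₀ (l.1, r) b := by
          rw [hT, h]; simp [LinearMap.sum_apply]
  have hxcR : ∀ (l : K) (i : Fin n) (g : Module.End k V) (b : B),
      xc l i (actR (op g) b) = ∑ r, bV.coord r (g (bV l.2)) * xc (l.1, r) i b := by
    intro l i g b
    have hxb : xB l (actR (op g) b) = ∑ r, bV.coord r (g (bV l.2)) • xB (l.1, r) b := by
      apply Subtype.ext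
      calc (xB l (actR (op g) b) : B) = T k₀ l (actR (op g) b) := rfl
        _ = ∑ r, bV.coord r (g (bV l.2)) • T k₀ (l.1, r) b := hTR l g b
        _ = ((∑ r, bV.coord r (g (bV l.2)) • xB (l.1, r) b : B₀) : B) := by
            rw [show ((∑ r, bV.coord r (g (bV l.2)) • xB (l.1, r) b : B₀) : B)
                = B₀.subtype (∑ r, bV.coord r (g (bV l.2)) • xB (l.1, r) b) from rfl,
              map_sum]
            rfl
    rw [hxc_eq, hxb, map_sum, Finset.sum_apply']
    exact Finset.sum_congr rfl fun r _ => by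
      rw [map_smul, Finsupp.smul_apply, smul_eq_mul, hxc_eq]
  have hReq : ∀ (g : Module.End k V) (b : B) (i : Fin n),
      eL (actR (op g) b) i = eL b i ∘ₗ g := by
    intro g b i
    apply hext
    intro l
    rw [happ2, hxcR, muh_apply, LinearMap.comp_apply]
    conv_rhs => rw [← bV.sum_repr (g (bV l.2))]
    rw [map_sum, map_sum]
    refine Finset.sum_congr rfl fun r _ => ?_
    rw [map_smul, map_smul, smul_eq_mul,
      show bW.coord l.1 (eL b i (bV r)) = xc (l.1, r) i b from
        (muh_apply bW bV (l.1, r) (eL b i)) ▸ happ2 b i (l.1, r),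
      Module.Basis.coord_apply]
  exact ⟨n, e, fun g b i => by rw [he, he, hLeq], fun g b i => by rw [he, he, hReq]⟩



section

variable {k U : Type*} [Field k] [Ring U] [HopfAlgebra k U]
variable {ι : Type*} [Fintype ι]

/-- The Drinfeld map `Φ(φ) = (φ ⊗ id)(R₂₁ R)`, for the R-matrix
`R = ∑ᵢ R₁ i ⊗ R₂ i`:  `Φ(φ) = ∑ᵢⱼ φ(R''ᵢ R'ⱼ) R'ᵢ R''ⱼ`. -/
noncomputable def drinfeldMap (R₁ R₂ : ι → U) (φ : Module.Dual k U) : U :=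
  ∑ i : ι, ∑ j : ι, φ (R₂ i * R₁ j) • (R₁ i * R₂ j)

/-- Let `U` be a finite-dimensional factorizable quasitriangular Hopf
algebra over a field `k`, `V, W` finite-dimensional `U`-modules (given by representations
`ρV, ρW`), and `B` a nonzero finite-dimensional `(End_k(W), End_k(V))`-bimodule in
`U`-mod which is compatible with the quantum moment maps `μ_V = ρV`, `μ_W = ρW` in the
sense that `h · b = μ_W(h₍₁₎) ▸ b ◂ μ_V(S(h₍₂₎))`.  Then `B` is isomorphic, as a bimodule
in `U`-mod, to a finite direct sum of copies of `Hom_k(V, W)` with the `U`-action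
`(h · f)(v) = h₍₁₎ · f(S(h₍₂₎) · v)` and the bimodule structure given by composition. -/
theorem qmmCompatible_bimodule_iso_directSum_hom
    [FiniteDimensional k U]
    (R₁ R₂ : ι → U)
    -- `R Δ(x) = Δᵒᵖ(x) R`:
    (ax_comm : ∀ (x : U) (r : Coalgebra.BundledRepr k x),
      ∑ i : ι, ∑ m ∈ r.index, (R₁ i * r.left m) ⊗ₜ[k] (R₂ i * r.right m) =
      ∑ i : ι, ∑ m ∈ r.index, (r.right m * R₁ i) ⊗ₜ[k] (r.left m * R₂ i))
    -- `(Δ ⊗ id)(R) = R₁₃ R₂₃`: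
    (ax_delta_left : ∀ r : ∀ i : ι, Coalgebra.BundledRepr k (R₁ i),
      ∑ i : ι, ∑ m ∈ (r i).index, ((r i).left m ⊗ₜ[k] (r i).right m) ⊗ₜ[k] R₂ i =
      ∑ i : ι, ∑ j : ι, (R₁ i ⊗ₜ[k] R₁ j) ⊗ₜ[k] (R₂ i * R₂ j))
    -- `(id ⊗ Δ)(R) = R₁₃ R₁₂`:
    (ax_delta_right : ∀ r : ∀ i : ι, Coalgebra.BundledRepr k (R₂ i),
      ∑ i : ι, ∑ m ∈ (r i).index, R₁ i ⊗ₜ[k] ((r i).left m ⊗ₜ[k] (r i).right m) =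
      ∑ i : ι, ∑ j : ι, (R₁ i * R₁ j) ⊗ₜ[k] (R₂ j ⊗ₜ[k] R₂ i))
    -- Yang–Baxter equation:
    (ax_ybe : ∑ i : ι, ∑ j : ι, ∑ l : ι,
        (R₁ i * R₁ j) ⊗ₜ[k] ((R₂ i * R₁ l) ⊗ₜ[k] (R₂ j * R₂ l)) =
      ∑ i : ι, ∑ j : ι, ∑ l : ι,
        (R₁ j * R₁ l) ⊗ₜ[k] ((R₁ i * R₂ l) ⊗ₜ[k] (R₂ i * R₂ j)))
    -- factorizability: the Drinfeld map is bijective: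
    (hfact : Function.Bijective (drinfeldMap (k := k) R₁ R₂))
    -- finite-dimensional `U`-modules `V` and `W`:
    {V W : Type*} [AddCommGroup V] [Module k V] [FiniteDimensional k V]
    [AddCommGroup W] [Module k W] [FiniteDimensional k W]
    (ρV : U →ₐ[k] Module.End k V) (ρW : U →ₐ[k] Module.End k W)
    -- a nonzero finite-dimensional `(End_k W, End_k V)`-bimodule `B`
    {B : Type*} [AddCommGroup B] [Module k B] [FiniteDimensional k B] [Nontrivial B]
    (actL : Module.End k W →ₐ[k] Module.End k B)
    (actR : (Module.End k V)ᵐᵒᵖ →ₐ[k] Module.End k B)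
    (hcomm : ∀ (g : Module.End k W) (g' : Module.End k V),
      Commute (actL g) (actR (op g')))
    -- a `U`-module structure on `B`, compatible with the quantum moment maps
    (ρB : U →ₐ[k] Module.End k B)
    (hcompat : ∀ (h : U) (b : B) (r : Coalgebra.BundledRepr k h),
      ρB h b = ∑ m ∈ r.index,
        actL (ρW (r.left m)) (actR (op (ρV (HopfAlgebra.antipode (R := k) (r.right m)))) b)) :
    ∃ (n : ℕ) (e : B ≃ₗ[k] (Fin n → (V →ₗ[k] W))),
      (∀ (g : Module.End k W) (b : B) (i : Fin n), e (actL g b) i = g ∘ₗ e b i) ∧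
      (∀ (g : Module.End k V) (b : B) (i : Fin n), e (actR (op g) b) i = e b i ∘ₗ g) ∧
      (∀ (h : U) (b : B) (r : Coalgebra.BundledRepr k h) (i : Fin n),
        e (ρB h b) i = ∑ m ∈ r.index,
          ρW (r.left m) ∘ₗ e b i ∘ₗ ρV (HopfAlgebra.antipode (R := k) (r.right m))) := by
  have hV : Nontrivial V := by
    by_contra hns
    rw [not_nontrivial_iff_subsingleton] at hns
    obtain ⟨b, hb⟩ := exists_ne (0 : B)
    apply hb
    have h10 : (1 : Module.End k V) = 0 := Subsingleton.elim _ _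
    have h1B : (1 : Module.End k B) = 0 := by
      calc (1 : Module.End k B) = actR (op 1) := by rw [op_one, map_one]
        _ = actR (op 0) := by rw [h10]
        _ = 0 := by rw [op_zero, map_zero]
    calc b = (1 : Module.End k B) b := (Module.End.one_apply b).symm
      _ = 0 := by rw [h1B]; exact LinearMap.zero_apply b
  have hW : Nontrivial W := by
    by_contra hns
    rw [not_nontrivial_iff_subsingleton] at hns
    obtain ⟨b, hb⟩ := exists_ne (0 : B)
    apply hb
    have h10 : (1 : Module.End k W) = 0 := Subsingleton.elim _ _
    have h1B : (1 : Module.End k B) = 0 := by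
      calc (1 : Module.End k B) = actL 1 := by rw [map_one]
        _ = actL 0 := by rw [h10]
        _ = 0 := by rw [map_zero]
    calc b = (1 : Module.End k B) b := (Module.End.one_apply b).symm
      _ = 0 := by rw [h1B]; exact LinearMap.zero_apply b
  obtain ⟨n, e, hL, hR⟩ := aux_bimodule actL actR hcomm (B := B) (V := V) (W := W)
  refine ⟨n, e, hL, hR, ?_⟩
  intro h b r i
  let Φ1 : U →ₗ[k] U →ₗ[k] (V →ₗ[k] W) := LinearMap.mk₂ k
    (fun x y => ρW x ∘ₗ e b i ∘ₗ ρV (HopfAlgebra.antipode (R := k) y))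
    (by intros; simp [map_add, LinearMap.add_comp, LinearMap.comp_add])
    (by intros; simp [map_smul, LinearMap.smul_comp, LinearMap.comp_smul])
    (by intros; simp [map_add, LinearMap.add_comp, LinearMap.comp_add])
    (by intros; simp [map_smul, LinearMap.smul_comp, LinearMap.comp_smul])
  let r0 := reprULift (R := k) h
  rw [hcompat h b r0, map_sum, Finset.sum_apply]
  calc ∑ m ∈ r0.index,
        e (actL (ρW (r0.left m))
          ((actR (op (ρV (HopfAlgebra.antipode (R := k) (r0.right m))))) b)) i
      = ∑ m ∈ r0.index, Φ1 (r0.left m) (r0.right m) := by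
        refine Finset.sum_congr rfl fun m _ => ?_
        rw [hL, hR]
        rfl
    _ = TensorProduct.lift Φ1 (Coalgebra.comul h) := repr_sum_eq Φ1 r0
    _ = ∑ m ∈ r.index, Φ1 (r.left m) (r.right m) := (repr_sum_eq Φ1 r).symm
    _ = ∑ m ∈ r.index,
          ρW (r.left m) ∘ₗ e b i ∘ₗ ρV (HopfAlgebra.antipode (R := k) (r.right m)) := rfl

end
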